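/- arXiv:2405.06317 — 3 statements merged into one kernel-verified Lean document; each statement's English description precedes it below -/
import Mathlib

section
/- Every nonzero polynomial P \in \mathbb{C}[z] of degree p can be written as P(z) = A \prod_{j=1}^N (z - z_j)^{\underline{n_j}} where A is a nonzero constant, n_1 + \cdots + n_N = p, and for each j, the factorization arises by repeatedly extracting from the remaining factor a zero z_j of length n_j with the property that z_j - 1 is not a zero of that factor. -/
open Polynomial

/-- The forward difference of a polynomial: `ΔP(z) = P(z+1) - P(z)`. -/
noncomputable def pdelta (P : Polynomial ℂ) : Polynomial ℂ := P.comp (X + C 1) - P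

lemma pdelta_eval (P : Polynomial ℂ) (x : ℂ) :
    (pdelta P).eval x = P.eval (x + 1) - P.eval x := by
  simp [pdelta, eval_comp]

lemma iter_pdelta_eval (n : ℕ) (P : Polynomial ℂ) (w : ℂ)
    (h : ∀ i < n, P.eval (w + i) = 0) :
    ((pdelta^[n]) P).eval w = P.eval (w + n) := by
  induction n generalizing P with
  | zero => simp
  | succ n ih =>
      rw [Function.iterate_succ_apply]
      rw [ih (pdelta P) ?_]
      · rw [pdelta_eval]
        have h0 : P.eval (w + n) = 0 := h n (by omega)
        rw [h0, sub_zero]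
        congr 1
        push_cast; ring
      · intro i hi
        rw [pdelta_eval]
        have h1 : P.eval (w + i) = 0 := h i (by omega)
        have h2 : P.eval (w + ((i:ℕ)+1 : ℕ)) = 0 := h (i+1) (by omega)
        rw [h1, sub_zero, show w + (i:ℂ) + 1 = w + (((i:ℕ)+1 : ℕ) : ℂ) by push_cast; ring, h2]

lemma prod_dvd (n : ℕ) (P : Polynomial ℂ) (w : ℂ)
    (h : ∀ i < n, P.eval (w + i) = 0) :
    (∏ k ∈ Finset.range n, (X - C w - C (k:ℂ))) ∣ P := by
  induction n with
  | zero => simp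
  | succ n ih =>
      obtain ⟨R, hR⟩ := ih (fun i hi => h i (by omega))
      have hev : eval (w + n) (∏ k ∈ Finset.range n, (X - C w - C (k:ℂ))) ≠ 0 := by
        rw [eval_prod]
        refine Finset.prod_ne_zero_iff.2 (fun k hk => ?_)
        simp only [eval_sub, eval_X, eval_C]
        intro hc
        have hnk : (n:ℂ) = k := by linear_combination hc
        have : n = k := by exact_mod_cast hnk
        exact absurd (Finset.mem_range.1 hk) (by omega)
      have hRroot : R.eval (w + n) = 0 := by
        have := h n (by omega)
        rw [hR, eval_mul] at this
        exact (mul_eq_zero.1 this).resolve_left hev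
      obtain ⟨S, hS⟩ := (dvd_iff_isRoot.2 hRroot : (X - C (w + n)) ∣ R)
      refine ⟨S, ?_⟩
      rw [Finset.prod_range_succ, hR, hS,
        show (X - C w - C (n:ℂ)) = X - C (w + n) by rw [C_add]; ring]
      ring

lemma aux_stmt8 : ∀ (d : ℕ) (P : Polynomial ℂ), P ≠ 0 → P.natDegree ≤ d →
    ∃ (N : ℕ) (A : ℂ) (z : Fin N → ℂ) (m : Fin N → ℕ) (Q : Fin (N + 1) → Polynomial ℂ),
      A ≠ 0 ∧ (∀ j, 1 ≤ m j) ∧ (∑ j, m j) = P.natDegree ∧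
      Q 0 = P ∧ Q (Fin.last N) = C A ∧
      (∀ j : Fin N, Q j.castSucc
          = (∏ k ∈ Finset.range (m j), (X - C (z j) - C (k : ℂ))) * Q j.succ) ∧
      (∀ j : Fin N,
        (∀ k < m j, ((pdelta^[k]) (Q j.castSucc)).eval (z j) = 0) ∧
        ((pdelta^[m j]) (Q j.castSucc)).eval (z j) ≠ 0 ∧
        (Q j.castSucc).eval (z j - 1) ≠ 0) := by
  intro d
  induction d using Nat.strong_induction_on with
  | _ d ih =>
  intro P hP hdeg
  by_cases h0 : P.natDegree = 0
  · refine ⟨0, P.coeff 0, Fin.elim0, Fin.elim0, fun _ => P, ?_, fun j => j.elim0, by simp [h0],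
      rfl, ?_, fun j => j.elim0, fun j => j.elim0⟩
    · intro hc
      exact hP ((eq_C_of_natDegree_eq_zero h0).trans (by rw [hc, map_zero]))
    · simp [h0]
      exact eq_C_of_natDegree_eq_zero h0
  · have hdegpos : 0 < P.natDegree := Nat.pos_of_ne_zero h0
    have hfin : {x : ℂ | P.IsRoot x}.Finite := Polynomial.finite_setOf_isRoot hP
    have hW : ∃ w, P.IsRoot w ∧ ¬ P.IsRoot (w - 1) := by
      by_contra hc
      push_neg at hc
      obtain ⟨w0, hw0⟩ := Complex.exists_root (natDegree_pos_iff_degree_pos.mp hdegpos)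
      have hall : ∀ k : ℕ, P.IsRoot (w0 - k) := by
        intro k
        induction k with
        | zero => simpa using hw0
        | succ k ihk =>
            have h' := hc _ ihk
            rwa [show w0 - (k:ℂ) - 1 = w0 - ((k+1 : ℕ) : ℂ) by push_cast; ring] at h'
      refine (Set.infinite_of_injective_forall_mem (f := fun k : ℕ => w0 - (k:ℂ))
        ?_ hall) hfin
      intro a b hab
      exact_mod_cast sub_right_inj.mp hab
    obtain ⟨w, hw, hw1⟩ := hW
    have hEx : ∃ i : ℕ, ¬ P.IsRoot (w + i) := by
      by_contra hc
      push_neg at hc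
      refine (Set.infinite_of_injective_forall_mem (f := fun k : ℕ => w + (k:ℂ))
        ?_ hc) hfin
      intro a b hab
      exact_mod_cast add_right_injective w hab
    set n := Nat.find hEx with hn
    have hroots : ∀ i < n, P.eval (w + i) = 0 := fun i hi => not_not.mp (Nat.find_min hEx hi)
    have hnot : ¬ P.IsRoot (w + n) := Nat.find_spec hEx
    have hn0 : 0 < n := by
      rcases Nat.eq_zero_or_pos n with h | h
      · exfalso; apply hnot; rw [h]; simpa using hw
      · exact h
    obtain ⟨R, hR⟩ := prod_dvd n P w hroots
    have hRne : R ≠ 0 := by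
      intro hc; apply hP; rw [hR, hc, mul_zero]
    have hFmonic : (∏ k ∈ Finset.range n, (X - C w - C (k:ℂ))).Monic := by
      refine monic_prod_of_monic _ _ (fun k _ => ?_)
      rw [show X - C w - C (k:ℂ) = X - C (w + k) by rw [C_add]; ring]
      exact monic_X_sub_C _
    have hFdeg : (∏ k ∈ Finset.range n, (X - C w - C (k:ℂ))).natDegree = n := by
      rw [natDegree_prod_of_monic _ _ (fun k _ => by
        rw [show X - C w - C (k:ℂ) = X - C (w + k) by rw [C_add]; ring]
        exact monic_X_sub_C _)]
      simp only [show ∀ k : ℕ, (X - C w - C (k:ℂ)).natDegree = 1 from fun k => by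
        rw [show X - C w - C (k:ℂ) = X - C (w + k) by rw [C_add]; ring]
        exact natDegree_X_sub_C _]
      simp
    have hPdeg : P.natDegree = n + R.natDegree := by
      rw [hR, natDegree_mul hFmonic.ne_zero hRne, hFdeg]
    have hRlt : R.natDegree < d := by omega
    obtain ⟨N, A, z', m', Q', hA, hm1, hsum, hQ0, hQlast, hfact, hcond⟩ :=
      ih R.natDegree hRlt R hRne le_rfl
    refine ⟨N + 1, A, Fin.cons w z', Fin.cons n m', Fin.cons P Q', hA, ?_, ?_, ?_, ?_, ?_, ?_⟩
    · intro j
      induction j using Fin.cases with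
      | zero => simpa using Nat.one_le_iff_ne_zero.mpr hn0.ne'
      | succ i => simpa using hm1 i
    · rw [Fin.sum_cons, hsum]; omega
    · rfl
    · rw [← Fin.succ_last, Fin.cons_succ]; exact hQlast
    · intro j
      induction j using Fin.cases with
      | zero =>
          simp only [Fin.castSucc_zero, Fin.cons_zero, Fin.succ_zero_eq_one]
          rw [show (1 : Fin (N + 2)) = Fin.succ 0 from rfl, Fin.cons_succ, hQ0]
          exact hR
      | succ i =>
          rw [← Fin.succ_castSucc, Fin.cons_succ, Fin.cons_succ, Fin.cons_succ, Fin.cons_succ]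
          exact hfact i
    · intro j
      induction j using Fin.cases with
      | zero =>
          simp only [Fin.castSucc_zero, Fin.cons_zero]
          refine ⟨?_, ?_, ?_⟩
          · intro k hk
            rw [iter_pdelta_eval k P w (fun i hi => hroots i (by omega))]
            exact hroots k hk
          · rw [iter_pdelta_eval n P w hroots]
            exact hnot
          · exact hw1
      | succ i =>
          rw [← Fin.succ_castSucc, Fin.cons_succ, Fin.cons_succ, Fin.cons_succ]
          exact hcond i

/-- every nonzero polynomial `P` of degree `p` can be written as
`P(z) = A ∏_{j=1}^N (z - z_j)^{\underline{n_j}}` with `A ≠ 0` and `n_1 + ⋯ + n_N = p`,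
the factorization arising by repeatedly extracting from the remaining factor `Q j` a zero
`z_j` of length `n_j` such that `z_j - 1` is not a zero of `Q j`. -/
theorem stmt_8 (P : Polynomial ℂ) (hP : P ≠ 0) :
    ∃ (N : ℕ) (A : ℂ) (z : Fin N → ℂ) (m : Fin N → ℕ) (Q : Fin (N + 1) → Polynomial ℂ),
      A ≠ 0 ∧ (∀ j, 1 ≤ m j) ∧ (∑ j, m j) = P.natDegree ∧
      Q 0 = P ∧ Q (Fin.last N) = C A ∧
      (∀ j : Fin N, Q j.castSucc
          = (∏ k ∈ Finset.range (m j), (X - C (z j) - C (k : ℂ))) * Q j.succ) ∧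
      (∀ j : Fin N,
        (∀ k < m j, ((pdelta^[k]) (Q j.castSucc)).eval (z j) = 0) ∧
        ((pdelta^[m j]) (Q j.castSucc)).eval (z j) ≠ 0 ∧
        (Q j.castSucc).eval (z j - 1) ≠ 0) := by
  exact aux_stmt8 P.natDegree P hP le_rfl
end

section
/- Let P be a polynomial of degree p and suppose z_1 is a zero of P with length n_1 (meaning P(z_1) = \Delta^k P(z_1) = 0 for 0 \leq k < n_1 and \Delta^{n_1} P(z_1) \neq 0) and P(z_1 - 1) \neq 0. Then there is a polynomial P_1 of degree p - n_1 with P(z) = (z - z_1)^{\underline{n_1}} P_1(z) and P_1(z_1 + n_1) \neq 0. -/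
open Polynomial

lemma pdelta_iter_eval (P : Polynomial ℂ) (k : ℕ) (z : ℂ) :
    ((pdelta^[k]) P).eval z = (fwdDiff (1 : ℂ))^[k] (fun w => P.eval w) z := by
  induction k generalizing P z with
  | zero => simp
  | succ n ih =>
      rw [Function.iterate_succ_apply, Function.iterate_succ_apply]
      rw [ih (pdelta P) z]
      have hf : (fun w => (pdelta P).eval w) = fwdDiff (1:ℂ) (fun w => P.eval w) := by
        funext w
        simp [pdelta, fwdDiff, eval_comp]
      rw [hf]

lemma shift_eval (P : Polynomial ℂ) (z1 : ℂ) (m : ℕ)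
    (h0 : ∀ k < m, ((pdelta^[k]) P).eval z1 = 0) :
    P.eval (z1 + m) = ((pdelta^[m]) P).eval z1 := by
  have := shift_eq_sum_fwdDiff_iter (1 : ℂ) (fun w => P.eval w) m z1
  simp only [nsmul_eq_mul, mul_one] at this
  rw [this, Finset.sum_range_succ]
  have hz : ∀ k ∈ Finset.range m,
      (m.choose k : ℂ) * (fwdDiff (1:ℂ))^[k] (fun w => P.eval w) z1 = 0 := by
    intro k hk
    rw [← pdelta_iter_eval, h0 k (Finset.mem_range.mp hk), mul_zero]
  rw [Finset.sum_eq_zero hz, zero_add, Nat.choose_self, Nat.cast_one, one_mul,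
    pdelta_iter_eval]

/-- if `z₁` is a zero of `P` with length `n₁` (i.e. `Δᵏ P(z₁) = 0` for
`0 ≤ k < n₁` and `Δ^{n₁} P(z₁) ≠ 0`) and `P(z₁ - 1) ≠ 0`, then
`P = (z - z₁)^{\underline{n₁}} P₁` with `deg P₁ = deg P - n₁` and `P₁(z₁ + n₁) ≠ 0`. -/
theorem stmt_9 (P : Polynomial ℂ) (z1 : ℂ) (n1 : ℕ) (hn : 1 ≤ n1)
    (h0 : ∀ k < n1, ((pdelta^[k]) P).eval z1 = 0)
    (h1 : ((pdelta^[n1]) P).eval z1 ≠ 0)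
    (h2 : P.eval (z1 - 1) ≠ 0) :
    ∃ P1 : Polynomial ℂ, P1.natDegree = P.natDegree - n1 ∧
      P = (∏ k ∈ Finset.range n1, (X - C z1 - C (k : ℂ))) * P1 ∧
      P1.eval (z1 + n1) ≠ 0 := by
  -- P vanishes at z1 + m for m < n1
  have hvan : ∀ m < n1, P.eval (z1 + m) = 0 := by
    intro m hm
    rw [shift_eval P z1 m (fun k hk => h0 k (hk.trans hm))]
    exact h0 m hm
  -- P (z1 + n1) ≠ 0
  have hne : P.eval (z1 + n1) ≠ 0 := by
    rw [shift_eval P z1 n1 h0]; exact h1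
  -- divisibility
  have hprodeq : ∀ k : ℕ, (X - C z1 - C (k : ℂ)) = X - C (z1 + k) := by
    intro k; rw [C_add]; ring
  have hdvd : (∏ k ∈ Finset.range n1, (X - C z1 - C (k : ℂ))) ∣ P := by
    apply Finset.prod_dvd_of_coprime
    · intro a ha b hb hab
      simp only [Function.onFun, hprodeq]
      apply Polynomial.isCoprime_X_sub_C_of_isUnit_sub
      have : (z1 + (a:ℕ)) - (z1 + (b:ℕ)) = ((a:ℕ):ℂ) - ((b:ℕ):ℂ) := by ring
      rw [this]
      exact isUnit_iff_ne_zero.mpr (sub_ne_zero.mpr (by exact_mod_cast hab))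
    · intro k hk
      rw [hprodeq]
      exact dvd_iff_isRoot.mpr (hvan k (Finset.mem_range.mp hk))
  obtain ⟨P1, hP1⟩ := hdvd
  have hprodne : (∏ k ∈ Finset.range n1, (X - C z1 - C (k : ℂ))).eval (z1 + n1) ≠ 0 := by
    rw [eval_prod]
    apply Finset.prod_ne_zero_iff.mpr
    intro k hk
    simp only [eval_sub, eval_X, eval_C]
    have : z1 + (n1:ℂ) - z1 - (k:ℂ) = ((n1:ℕ):ℂ) - ((k:ℕ):ℂ) := by ring
    rw [this]
    refine sub_ne_zero.mpr ?_
    exact_mod_cast (Finset.mem_range.mp hk).ne'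
  have hP1ne : P1.eval (z1 + n1) ≠ 0 := by
    intro h
    apply hne
    rw [hP1, eval_mul, h, mul_zero]
  have hP1nz : P1 ≠ 0 := fun h => hP1ne (by simp [h])
  have hproddeg : (∏ k ∈ Finset.range n1, (X - C z1 - C (k : ℂ))).natDegree = n1 := by
    rw [Finset.prod_congr rfl (fun k _ => hprodeq k),
      Polynomial.natDegree_prod _ _ (fun k _ => Polynomial.X_sub_C_ne_zero _)]
    simp only [Polynomial.natDegree_X_sub_C]
    simp
  refine ⟨P1, ?_, hP1, hP1ne⟩
  rw [hP1, natDegree_mul (by intro h; rw [h] at hprodne; simp at hprodne) hP1nz, hproddeg]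
  omega
end

section
/- Difference Fermat equation for polynomials with a constant term: if a and b are nonconstant polynomials over \mathbb{C}, c is a nonzero constant, n \geq 2, and a^{\underline{n}}(z) := a(z)a(z-1)\cdots a(z-n+1) (similarly for b), with a^{\underline{n}}, b^{\underline{n}}, c^n pairwise relatively shifting prime, then a^{\underline{n}} + b^{\underline{n}} = c^n is impossible. -/
open Polynomial

/-- The shifted product `p^{\underline{n}}(z) = p(z)p(z-1)⋯p(z-n+1)`. -/
noncomputable def pfall (p : Polynomial ℂ) (n : ℕ) : Polynomial ℂ :=
  ∏ k ∈ Finset.range n, p.comp (X - C (k : ℂ))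

lemma pfall_succ (p : Polynomial ℂ) (m : ℕ) :
    pfall p (m + 1) = pfall p m * p.comp (X - C (m : ℂ)) := by
  simp [pfall, Finset.prod_range_succ]

lemma pfall_comp_shift (p : Polynomial ℂ) (m : ℕ) :
    (pfall p (m + 1)).comp (X + C 1) = pfall p m * p.comp (X + C 1) := by
  unfold pfall
  rw [prod_comp, Finset.prod_range_succ']
  have h1 : ∀ k : ℕ, (p.comp (X - C ((k + 1 : ℕ) : ℂ))).comp (X + C 1)
      = p.comp (X - C (k : ℂ)) := by
    intro k
    rw [comp_assoc]
    congr 1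
    simp only [sub_comp, X_comp, C_comp]
    push_cast
    rw [map_add]
    ring
  have h2 : (p.comp (X - C ((0 : ℕ) : ℂ))).comp (X + C 1) = p.comp (X + C 1) := by
    rw [comp_assoc]
    congr 1
    simp
  rw [h2]
  congr 1
  exact Finset.prod_congr rfl fun k _ => h1 k

lemma pfall_ne_zero (p : Polynomial ℂ) (hp : p ≠ 0) (n : ℕ) : pfall p n ≠ 0 := by
  unfold pfall
  apply Finset.prod_ne_zero_iff.mpr
  intro k _
  intro h
  rcases comp_eq_zero_iff.mp h with h' | ⟨_, h'⟩
  · exact hp h'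
  · have hdeg : (X - C (k:ℂ)).natDegree = 1 := natDegree_X_sub_C _
    rw [h', natDegree_C] at hdeg
    simp at hdeg

lemma pfall_natDegree (p : Polynomial ℂ) (hp : p ≠ 0) (n : ℕ) :
    (pfall p n).natDegree = n * p.natDegree := by
  unfold pfall
  rw [natDegree_prod]
  · have : ∀ k ∈ Finset.range n, (p.comp (X - C (k : ℂ))).natDegree = p.natDegree := by
      intro k _
      rw [natDegree_comp, natDegree_X_sub_C, mul_one]
    rw [Finset.sum_congr rfl this, Finset.sum_const, Finset.card_range, smul_eq_mul]
  · intro k hk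
    intro h
    rcases comp_eq_zero_iff.mp h with h' | ⟨_, h'⟩
    · exact hp h'
    · have hdeg : (X - C (k:ℂ)).natDegree = 1 := natDegree_X_sub_C _
      rw [h', natDegree_C] at hdeg
      simp at hdeg

/-- `z - z₀` is a common shifting divisor of `f` and `g`: there are factorizations
`f = (z - z₁)^{\underline{m₁}} F`, `g = (z - z₂)^{\underline{n₁}} G` with
`fg = (z - z₀)^{\underline{m₁+n₁}} F G` and `z₀ ∈ {z₁, z₂}`. -/
def CommonShiftingDivisor (f g : Polynomial ℂ) (z0 : ℂ) : Prop :=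
  ∃ (z1 z2 : ℂ) (m1 n1 : ℕ) (F G : Polynomial ℂ), 1 ≤ m1 ∧ 1 ≤ n1 ∧
    f = (∏ k ∈ Finset.range m1, (X - C z1 - C (k : ℂ))) * F ∧
    g = (∏ k ∈ Finset.range n1, (X - C z2 - C (k : ℂ))) * G ∧
    (z0 = z1 ∨ z0 = z2) ∧
    f * g = (∏ k ∈ Finset.range (m1 + n1), (X - C z0 - C (k : ℂ))) * (F * G)

/-- `f` and `g` are relatively shifting prime: no common shifting divisor. -/
def RelShiftingPrime (f g : Polynomial ℂ) : Prop :=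
  ∀ z0 : ℂ, ¬CommonShiftingDivisor f g z0

/-- if `a, b` are nonconstant polynomials, `c` a nonzero constant, `n ≥ 2`,
and `a^{\underline{n}}, b^{\underline{n}}, cⁿ` are pairwise relatively shifting prime, then
`a^{\underline{n}} + b^{\underline{n}} = cⁿ` is impossible. -/
theorem stmt_18 (a b : Polynomial ℂ) (ha : 1 ≤ a.natDegree) (hb : 1 ≤ b.natDegree)
    (c : ℂ) (hc : c ≠ 0) (n : ℕ) (hn : 2 ≤ n)
    (hab : RelShiftingPrime (pfall a n) (pfall b n))
    (hac : RelShiftingPrime (pfall a n) (C (c ^ n)))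
    (hbc : RelShiftingPrime (pfall b n) (C (c ^ n))) :
    pfall a n + pfall b n ≠ C (c ^ n) := by
  intro heq
  have ha0 : a ≠ 0 := fun h => by simp [h] at ha
  have hb0 : b ≠ 0 := fun h => by simp [h] at hb
  obtain ⟨m, rfl⟩ : ∃ m, n = m + 1 := ⟨n - 1, by omega⟩
  have hm : 1 ≤ m := by omega
  set f := pfall a (m + 1) with hfdef
  set g := pfall b (m + 1) with hgdef
  have hdf : f.natDegree = (m + 1) * a.natDegree := pfall_natDegree a ha0 _
  have hdg : g.natDegree = (m + 1) * b.natDegree := pfall_natDegree b hb0 _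
  -- a and b have the same degree
  have hdeq : a.natDegree = b.natDegree := by
    have hg_eq : g = C (c ^ (m + 1)) - f := eq_sub_of_add_eq' heq
    have hlt : (C (c ^ (m + 1)) : Polynomial ℂ).natDegree < f.natDegree := by
      rw [natDegree_C, hdf]
      nlinarith
    have : g.natDegree = f.natDegree := by
      rw [hg_eq, natDegree_sub_eq_right_of_natDegree_lt hlt]
    rw [hdf, hdg] at this
    exact (Nat.eq_of_mul_eq_mul_left (Nat.succ_pos m) this).symm
  -- coprimality of f and g
  have hcop : IsCoprime f g := by
    refine ⟨C ((c ^ (m + 1))⁻¹), C ((c ^ (m + 1))⁻¹), ?_⟩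
    have h1 : (C ((c ^ (m + 1))⁻¹) : Polynomial ℂ) * C (c ^ (m + 1)) = 1 := by
      rw [← C_mul, inv_mul_cancel₀ (pow_ne_zero _ hc), C_1]
    linear_combination (C ((c ^ (m + 1))⁻¹) : Polynomial ℂ) * heq + h1
  set P := pfall a m with hPdef
  set Q := pfall b m with hQdef
  set Δa := a.comp (X + C 1) - a.comp (X - C (m : ℂ)) with hΔa
  set Δb := b.comp (X + C 1) - b.comp (X - C (m : ℂ)) with hΔb
  -- the key identity
  have key : P * Δa = Q * (-Δb) := by
    have hfa : f.comp (X + C 1) - f = P * Δa := by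
      rw [hfdef, pfall_comp_shift, pfall_succ, hΔa]; ring
    have hgb : g.comp (X + C 1) - g = Q * Δb := by
      rw [hgdef, pfall_comp_shift, pfall_succ, hΔb]; ring
    have hsum : (f.comp (X + C 1) - f) + (g.comp (X + C 1) - g) = 0 := by
      have h1 : f.comp (X + C 1) + g.comp (X + C 1) = C (c ^ (m + 1)) := by
        rw [← add_comp, heq, C_comp]
      linear_combination h1 - heq
    rw [hfa, hgb] at hsum
    linear_combination hsum
  -- coprimality of Q and P
  have hQP : IsCoprime Q P := by
    have hQg : Q ∣ g := ⟨b.comp (X - C (m : ℂ)), pfall_succ b m⟩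
    have hPf : P ∣ f := ⟨a.comp (X - C (m : ℂ)), pfall_succ a m⟩
    exact IsCoprime.of_isCoprime_of_dvd_left
      (IsCoprime.of_isCoprime_of_dvd_right hcop.symm hPf) hQg
  have hQdvd : Q ∣ Δa := hQP.dvd_of_dvd_mul_left ⟨-Δb, key⟩
  -- Δa must be zero
  have hΔa0 : Δa = 0 := by
    by_contra hne
    have hQle : Q.natDegree ≤ Δa.natDegree := natDegree_le_of_dvd hQdvd hne
    have hQd : Q.natDegree = m * b.natDegree := pfall_natDegree b hb0 m
    -- Δa has degree < a.natDegree
    have hd1 : (a.comp (X + C 1)).natDegree = a.natDegree := by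
      rw [natDegree_comp, natDegree_X_add_C, mul_one]
    have hd2 : (a.comp (X - C (m : ℂ))).natDegree = a.natDegree := by
      rw [natDegree_comp, natDegree_X_sub_C, mul_one]
    have hne1 : a.comp (X + C 1) ≠ 0 := fun h => by
      rw [h, natDegree_zero] at hd1; omega
    have hne2 : a.comp (X - C (m : ℂ)) ≠ 0 := fun h => by
      rw [h, natDegree_zero] at hd2; omega
    have hdeg_eq : (a.comp (X + C 1)).degree = (a.comp (X - C (m : ℂ))).degree := by
      rw [degree_eq_natDegree hne1, degree_eq_natDegree hne2, hd1, hd2]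
    have hlc : (a.comp (X + C 1)).leadingCoeff = (a.comp (X - C (m : ℂ))).leadingCoeff := by
      rw [leadingCoeff_comp (by rw [natDegree_X_add_C]; norm_num),
        leadingCoeff_comp (by rw [natDegree_X_sub_C]; norm_num),
        leadingCoeff_X_add_C, leadingCoeff_X_sub_C]
    have hdlt : Δa.degree < (a.comp (X + C 1)).degree :=
      degree_sub_lt hdeg_eq hne1 hlc
    have hnlt : Δa.natDegree < (a.comp (X + C 1)).natDegree :=
      natDegree_lt_natDegree hne hdlt
    rw [hd1] at hnlt
    have : 1 * a.natDegree ≤ m * b.natDegree := by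
      apply Nat.mul_le_mul hm
      omega
    omega
  -- from Δa = 0, a is periodic, contradiction
  have hper : a.comp (X - C ((m : ℂ) + 1)) = a := by
    have h0 : a.comp (X + C 1) = a.comp (X - C (m : ℂ)) := by
      have := hΔa0
      rw [hΔa, sub_eq_zero] at this
      exact this
    have := congrArg (fun p => p.comp (X - C (1 : ℂ))) h0
    simp only [comp_assoc] at this
    have e1 : ((X : Polynomial ℂ) + C 1).comp (X - C (1 : ℂ)) = X := by
      simp [add_comp, X_comp, C_comp]
    have e2 : ((X : Polynomial ℂ) - C (m : ℂ)).comp (X - C (1 : ℂ)) = X - C ((m : ℂ) + 1) := by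
      simp only [sub_comp, X_comp, C_comp]
      rw [map_add]
      ring
    rw [e1, e2, comp_X] at this
    exact this.symm
  have hval : ∀ k : ℕ, a.eval (-(k * ((m : ℂ) + 1))) = a.eval 0 := by
    intro k
    induction k with
    | zero => norm_num
    | succ k ih =>
      have := congrArg (fun p => p.eval (-(k * ((m : ℂ) + 1)))) hper
      simp only [eval_comp, eval_sub, eval_X, eval_C] at this
      have hcast : -(((k + 1 : ℕ) : ℂ) * ((m : ℂ) + 1))
          = -((k : ℂ) * ((m : ℂ) + 1)) - ((m : ℂ) + 1) := by push_cast; ring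
      rw [hcast, this, ih]
  have hroots : Set.Infinite { x | (a - C (a.eval 0)).IsRoot x } := by
    apply Set.Infinite.mono (s := Set.range (fun k : ℕ => -(k * ((m : ℂ) + 1))))
    · rintro x ⟨k, rfl⟩
      simp [IsRoot, hval k]
    · apply Set.infinite_range_of_injective
      intro i j hij
      have hmne : ((m : ℂ) + 1) ≠ 0 := by
        have : ((m : ℂ) + 1) = ((m + 1 : ℕ) : ℂ) := by push_cast; ring
        rw [this]
        exact_mod_cast Nat.succ_ne_zero m
      have hij' : (i : ℂ) * ((m : ℂ) + 1) = (j : ℂ) * ((m : ℂ) + 1) := by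
        linear_combination -hij
      exact_mod_cast mul_right_cancel₀ hmne hij'
  have : a - C (a.eval 0) = 0 := (a - C (a.eval 0)).eq_zero_of_infinite_isRoot hroots
  have : a = C (a.eval 0) := by linear_combination this
  rw [this, natDegree_C] at ha
  omega
end
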